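/- Let I be a collection of nonempty proper subsets of {1,...,n} such that for every nonempty proper subset I of {1,...,n} and every pair of elements x ∈ I, y ∉ I, at least one of I and (I \ {x}) ∪ {y} belongs to I. Then |I| ≥ ((n-1)/(n+1)) * (2^n - 1). -/

import Mathlib

open Finset

/-- Let `𝓘` be a collection of nonempty proper subsets of `{1,...,n}` such that for
every nonempty proper subset `I` of `{1,...,n}` and every `x ∈ I`, `y ∈ {1,...,n} \ I`,
at least one of `I` and `(I \ {x}) ∪ {y}` belongs to `𝓘`.  Then
`|𝓘| ≥ ((n-1)/(n+1)) · (2^n - 1)`. -/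
theorem stmt_17 (n : ℕ) (𝓘 : Finset (Finset ℕ))
    (hmem : ∀ J ∈ 𝓘, J ⊆ Finset.Icc 1 n ∧ J.Nonempty ∧ J ≠ Finset.Icc 1 n)
    (hcover : ∀ I : Finset ℕ, I ⊆ Finset.Icc 1 n → I.Nonempty → I ≠ Finset.Icc 1 n →
      ∀ x ∈ I, ∀ y ∈ Finset.Icc 1 n, y ∉ I →
        I ∈ 𝓘 ∨ insert y (I.erase x) ∈ 𝓘) :
    (((n : ℚ) - 1) / ((n : ℚ) + 1)) * (2 ^ n - 1) ≤ (𝓘.card : ℚ) := by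
  classical
  rcases Nat.eq_zero_or_pos n with hn | hn
  · subst hn
    norm_num
  set U := Finset.Icc 1 n with hUdef
  have hUcard : U.card = n := by simp [hUdef]
  have hUne : U.Nonempty := ⟨1, by simp [hUdef, Finset.mem_Icc]; omega⟩
  set P := U.powerset.filter (fun J => J.Nonempty ∧ J ≠ U) with hPdef
  have hIP : 𝓘 ⊆ P := by
    intro J hJ
    obtain ⟨h1, h2, h3⟩ := hmem J hJ
    simp only [hPdef, mem_filter, mem_powerset]
    exact ⟨h1, h2, h3⟩
  have h2n : 2 ≤ 2 ^ n := by
    calc (2:ℕ) = 2 ^ 1 := rfl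
    _ ≤ 2 ^ n := Nat.pow_le_pow_right (by norm_num) hn
  have hPcard : P.card + 2 = 2 ^ n := by
    have hPeq : P = U.powerset \ {∅, U} := by
      ext J
      simp only [hPdef, mem_filter, mem_sdiff, mem_powerset, mem_insert, mem_singleton,
        Finset.nonempty_iff_ne_empty]
      tauto
    have hsub : ({∅, U} : Finset (Finset ℕ)) ⊆ U.powerset := by
      intro J hJ
      simp only [mem_insert, mem_singleton] at hJ
      rcases hJ with rfl | rfl <;> simp
    have hc2 : ({∅, U} : Finset (Finset ℕ)).card = 2 :=
      card_pair (hUne.ne_empty).symm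
    rw [hPeq, card_sdiff_of_subset hsub, card_powerset, hUcard, hc2, Nat.sub_add_cancel h2n]
  set G := P \ 𝓘 with hGdef
  have hGI : G.card + 𝓘.card = P.card := card_sdiff_add_card_eq_card hIP
  have hGmem : ∀ S ∈ G, S ⊆ U ∧ S.Nonempty ∧ S ≠ U ∧ S ∉ 𝓘 := by
    intro S hS
    rw [hGdef, mem_sdiff, hPdef, mem_filter, mem_powerset] at hS
    tauto
  have hfib : G.card = ∑ k ∈ Finset.Icc 1 (n-1), (G.filter (fun S => S.card = k)).card := by
    apply card_eq_sum_card_fiberwise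
    intro S hS
    obtain ⟨h1, h2, h3, h4⟩ := hGmem S hS
    simp only [mem_coe, mem_Icc]
    refine ⟨h2.card_pos, ?_⟩
    have hss : S ⊂ U := ssubset_of_subset_of_ne h1 h3
    have := card_lt_card hss
    omega
  have hkey : ∀ k ∈ Finset.Icc 1 (n-1),
      (n+1) * (G.filter (fun S => S.card = k)).card ≤ (n+1).choose k := by
    intro k hk
    simp only [mem_Icc] at hk
    set Gk := G.filter (fun S => S.card = k) with hGkdef
    have hGkmem : ∀ S ∈ Gk, S ⊆ U ∧ S.Nonempty ∧ S ≠ U ∧ S ∉ 𝓘 ∧ S.card = k := by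
      intro S hS
      rw [hGkdef, mem_filter] at hS
      obtain ⟨h1, h2, h3, h4⟩ := hGmem S hS.1
      exact ⟨h1, h2, h3, h4, hS.2⟩
    have hdisj : ∀ S ∈ Gk, ∀ S' ∈ Gk, S ≠ S' →
        Disjoint (S.powersetCard (k-1)) (S'.powersetCard (k-1)) := by
      intro S hS S' hS' hne
      rw [Finset.disjoint_left]
      intro T hT hT'
      obtain ⟨hSU, hSne, hSneU, hSnI, hScard⟩ := hGkmem S hS
      obtain ⟨hS'U, hS'ne, hS'neU, hS'nI, hS'card⟩ := hGkmem S' hS'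
      rw [mem_powersetCard] at hT hT'
      obtain ⟨hTS, hTcard⟩ := hT
      obtain ⟨hTS', _⟩ := hT'
      have hx1 : (S \ T).card = 1 := by
        rw [card_sdiff_of_subset hTS, hScard, hTcard]; omega
      have hy1 : (S' \ T).card = 1 := by
        rw [card_sdiff_of_subset hTS', hS'card, hTcard]; omega
      obtain ⟨x, hxeq⟩ := card_eq_one.mp hx1
      obtain ⟨y, hyeq⟩ := card_eq_one.mp hy1
      have hSx : S = insert x T := by
        have h := union_sdiff_of_subset hTS
        rw [hxeq, union_comm, ← insert_eq] at h
        exact h.symm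
      have hS'y : S' = insert y T := by
        have h := union_sdiff_of_subset hTS'
        rw [hyeq, union_comm, ← insert_eq] at h
        exact h.symm
      have hxT : x ∉ T := by
        have : x ∈ S \ T := hxeq ▸ mem_singleton_self x
        exact (mem_sdiff.mp this).2
      have hyT : y ∉ T := by
        have : y ∈ S' \ T := hyeq ▸ mem_singleton_self y
        exact (mem_sdiff.mp this).2
      have hxy : x ≠ y := by
        intro h
        apply hne
        rw [hSx, hS'y, h]
      have hxS : x ∈ S := by rw [hSx]; exact mem_insert_self x T
      have hyS' : y ∈ S' := by rw [hS'y]; exact mem_insert_self y T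
      have hyU : y ∈ U := hS'U hyS'
      have hyS : y ∉ S := by
        rw [hSx, mem_insert]
        rintro (h | h)
        · exact hxy h.symm
        · exact hyT h
      have herase : S.erase x = T := by rw [hSx, erase_insert hxT]
      rcases hcover S hSU hSne hSneU x hxS y hyU hyS with h | h
      · exact hSnI h
      · rw [herase, ← hS'y] at h
        exact hS'nI h
    have hbU : Gk.biUnion (fun S => S.powersetCard (k-1)) ⊆ U.powersetCard (k-1) := by
      intro T hT
      simp only [mem_biUnion] at hT
      obtain ⟨S, hS, hTS⟩ := hT
      rw [mem_powersetCard] at hTS ⊢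
      exact ⟨hTS.1.trans (hGkmem S hS).1, hTS.2⟩
    have hchoosek : Nat.choose k (k-1) = k := by
      have h1 : (1:ℕ) ≤ k := hk.1
      rw [Nat.choose_symm h1, Nat.choose_one_right]
    have hcount : Gk.card * k ≤ n.choose (k-1) := by
      have h1 : (Gk.biUnion (fun S => S.powersetCard (k-1))).card
          = ∑ S ∈ Gk, (S.powersetCard (k-1)).card := card_biUnion hdisj
      have h2 : ∀ S ∈ Gk, (S.powersetCard (k-1)).card = k := by
        intro S hS
        rw [card_powersetCard, (hGkmem S hS).2.2.2.2, hchoosek]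
      calc Gk.card * k = ∑ _S ∈ Gk, k := by rw [sum_const, smul_eq_mul]
      _ = ∑ S ∈ Gk, (S.powersetCard (k-1)).card := (sum_congr rfl h2).symm
      _ = (Gk.biUnion (fun S => S.powersetCard (k-1))).card := h1.symm
      _ ≤ (U.powersetCard (k-1)).card := card_le_card hbU
      _ = n.choose (k-1) := by rw [card_powersetCard, hUcard]
    have hmul := Nat.add_one_mul_choose_eq n (k-1)
    have hk1 : k - 1 + 1 = k := by omega
    rw [hk1] at hmul
    have hle : (n+1) * (Gk.card * k) ≤ (n+1) * n.choose (k-1) :=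
      Nat.mul_le_mul_left _ hcount
    rw [hmul] at hle
    have hkpos : 0 < k := hk.1
    apply Nat.le_of_mul_le_mul_right _ hkpos
    calc (n+1) * Gk.card * k = (n+1) * (Gk.card * k) := by ring
    _ ≤ (n+1).choose k * k := hle
  have hrange : Finset.range (n+2) = insert 0 (insert n (insert (n+1) (Finset.Icc 1 (n-1)))) := by
    ext x
    simp only [mem_range, mem_insert, mem_Icc]
    omega
  have hchoosesum : ∑ k ∈ Finset.range (n+2), (n+1).choose k = 2^(n+1) :=
    Nat.sum_range_choose (n+1)
  have hsum : (∑ k ∈ Finset.Icc 1 (n-1), (n+1).choose k) + (n+3) = 2^(n+1) := by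
    rw [hrange, sum_insert (by simp only [mem_insert, mem_Icc]; omega),
      sum_insert (by simp only [mem_insert, mem_Icc]; omega),
      sum_insert (by simp only [mem_Icc]; omega),
      Nat.choose_zero_right, Nat.choose_self, Nat.choose_succ_self_right] at hchoosesum
    linarith
  have hGbound : (n+1) * G.card + (n+3) ≤ 2^(n+1) := by
    calc (n+1) * G.card + (n+3)
        = (∑ k ∈ Finset.Icc 1 (n-1), (n+1) * (G.filter (fun S => S.card = k)).card) + (n+3) := by
          rw [hfib, mul_sum]
    _ ≤ (∑ k ∈ Finset.Icc 1 (n-1), (n+1).choose k) + (n+3) :=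
          Nat.add_le_add_right (sum_le_sum hkey) _
    _ = 2^(n+1) := hsum
  have hnat1 : G.card + 𝓘.card + 2 = 2^n := by
    rw [← hPcard, hGI]
  have hq1 : (G.card : ℚ) + 𝓘.card + 2 = 2^n := by
    have := congrArg (fun m : ℕ => (m : ℚ)) hnat1
    push_cast at this
    exact this
  have hq2 : ((n:ℚ)+1) * G.card + ((n:ℚ)+3) ≤ 2 * 2^n := by
    have h2 : (((n+1) * G.card + (n+3) : ℕ) : ℚ) ≤ ((2^(n+1) : ℕ) : ℚ) := by
      exact_mod_cast hGbound
    push_cast at h2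
    rw [pow_succ] at h2
    linarith
  have hn1 : (1:ℚ) ≤ (n:ℚ) := by exact_mod_cast hn
  rw [div_mul_eq_mul_div, div_le_iff₀ (by linarith : (0:ℚ) < (n:ℚ)+1)]
  have hq3 : (G.card : ℚ) = 2^n - 2 - 𝓘.card := by linarith
  rw [hq3] at hq2
  nlinarith [hq2]
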